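/- Jacobian of the Cholesky map in the nonsingular real case: the smooth map T ↦ Tᵀ T from the open set of m×m upper triangular matrices with positive diagonal onto the cone of symmetric positive definite matrices is a diffeomorphism, and the absolute value of its Jacobian determinant at T equals 2^m ∏_{i=1}^m t_{ii}^(m−i+1). -/

import Mathlib

open Matrix

/-- Index type for the independent entries of upper-triangular /
symmetric `m × m` matrices. -/
abbrev TriIdx (m : ℕ) := { p : Fin m × Fin m // p.1 ≤ p.2 }

/-- The upper-triangular matrix built from its coordinates. -/
def utOf {m : ℕ} (x : TriIdx m → ℝ) : Matrix (Fin m) (Fin m) ℝ :=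
  fun i j => if h : i ≤ j then x ⟨(i, j), h⟩ else 0

/-- The symmetric matrix built from its upper-triangular coordinates. -/
def symMatOf {m : ℕ} (y : TriIdx m → ℝ) : Matrix (Fin m) (Fin m) ℝ :=
  fun i j => if h : i ≤ j then y ⟨(i, j), h⟩ else y ⟨(j, i), le_of_not_ge h⟩

/-- The coordinates of a matrix on and above the diagonal. -/
def coordsOf {m : ℕ} (M : Matrix (Fin m) (Fin m) ℝ) : TriIdx m → ℝ :=
  fun p => M p.1.1 p.1.2

variable {m : ℕ}

lemma utOf_blockTriangular (x : TriIdx m → ℝ) : (utOf x).BlockTriangular id := by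
  intro i j h
  simp only [id] at h
  exact dif_neg (not_le.2 h)

lemma utOf_diag (x : TriIdx m → ℝ) (i : Fin m) : utOf x i i = x ⟨(i, i), le_refl i⟩ := by
  simp [utOf]

lemma det_utOf (x : TriIdx m → ℝ) : (utOf x).det = ∏ i, x ⟨(i, i), le_refl i⟩ := by
  rw [Matrix.det_of_upperTriangular (utOf_blockTriangular x)]
  exact Finset.prod_congr rfl fun i _ => utOf_diag x i

lemma symMatOf_coordsOf {M : Matrix (Fin m) (Fin m) ℝ} (h : Mᵀ = M) :
    symMatOf (coordsOf M) = M := by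
  ext i j
  simp only [symMatOf, coordsOf]
  split
  · rfl
  · exact congrFun (congrFun h i) j

lemma coordsOf_symMatOf (y : TriIdx m → ℝ) : coordsOf (symMatOf y) = y := by
  funext p
  simp only [coordsOf, symMatOf, dif_pos p.2]

lemma utOf_coordsOf {T : Matrix (Fin m) (Fin m) ℝ} (h : T.BlockTriangular id) :
    utOf (coordsOf T) = T := by
  ext i j
  simp only [utOf, coordsOf]
  split
  · rfl
  · exact (h (by simpa using not_le.1 (by assumption))).symm

lemma det_utOf_ne_zero {x : TriIdx m → ℝ} (hx : ∀ i, 0 < x ⟨(i, i), le_refl i⟩) :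
    (utOf x).det ≠ 0 := by
  rw [det_utOf]; exact (Finset.prod_pos (fun i _ => hx i)).ne'

lemma tmul_posDef {x : TriIdx m → ℝ} (hx : ∀ i, 0 < x ⟨(i, i), le_refl i⟩) :
    ((utOf x)ᵀ * utOf x).PosDef := by
  set T := utOf x with hT
  have hinj : Function.Injective T.mulVec :=
    Matrix.mulVec_injective_iff_isUnit.2 ((Matrix.isUnit_iff_isUnit_det T).2
      (isUnit_iff_ne_zero.2 (det_utOf_ne_zero hx)))
  refine Matrix.PosDef.of_dotProduct_mulVec_pos ?_ ?_
  · have := Matrix.isHermitian_conjTranspose_mul_self T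
    rwa [Matrix.conjTranspose_eq_transpose_of_trivial] at this
  · intro v hv
    have hw : T.mulVec v ≠ 0 := fun h => hv (hinj (h.trans (Matrix.mulVec_zero T).symm))
    have : star v ⬝ᵥ ((Tᵀ * T) *ᵥ v) = (T *ᵥ v) ⬝ᵥ star (T *ᵥ v) := by
      rw [star_trivial, ← Matrix.mulVec_mulVec, Matrix.dotProduct_mulVec,
        Matrix.vecMul_transpose, star_trivial]
    rw [this]
    exact Matrix.dotProduct_self_star_pos_iff.2 hw

lemma utOf_apply_coords (x : TriIdx m → ℝ) (p : TriIdx m) : utOf x p.1.1 p.1.2 = x p := by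
  obtain ⟨⟨i, j⟩, h⟩ := p
  simp [utOf, h]

lemma cholesky_unique {x1 x2 : TriIdx m → ℝ}
    (h1 : ∀ i : Fin m, 0 < x1 ⟨(i, i), le_refl i⟩) (h2 : ∀ i : Fin m, 0 < x2 ⟨(i, i), le_refl i⟩)
    (h : (utOf x1)ᵀ * utOf x1 = (utOf x2)ᵀ * utOf x2) : x1 = x2 := by
  set T1 := utOf x1 with hT1
  set T2 := utOf x2 with hT2
  haveI : Invertible T2 := Matrix.invertibleOfIsUnitDet T2
    (isUnit_iff_ne_zero.2 (det_utOf_ne_zero h2))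
  set U := T1 * T2⁻¹ with hU
  have hUT2 : U * T2 = T1 := Matrix.inv_mul_cancel_right_of_invertible (A := T2) T1
  have hUo : Uᵀ * U = 1 := by
    have h2i : (T2⁻¹)ᵀ * T2ᵀ = 1 := by
      rw [← Matrix.transpose_mul, Matrix.mul_inv_of_invertible, Matrix.transpose_one]
    rw [hU, Matrix.transpose_mul]
    simp only [Matrix.mul_assoc]
    rw [show T1ᵀ * (T1 * T2⁻¹) = (T1ᵀ * T1) * T2⁻¹ from (Matrix.mul_assoc _ _ _).symm, h,
      Matrix.mul_assoc, Matrix.mul_inv_of_invertible, Matrix.mul_one, h2i]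
  haveI : Invertible U := invertibleOfLeftInverse U Uᵀ hUo
  have hUtri : U.BlockTriangular id :=
    (utOf_blockTriangular x1).mul (Matrix.blockTriangular_inv_of_blockTriangular
      (utOf_blockTriangular x2))
  have hUtri' : (Uᵀ).BlockTriangular id := by
    have := Matrix.blockTriangular_inv_of_blockTriangular hUtri
    rwa [Matrix.inv_eq_left_inv hUo] at this
  have hUoff : ∀ i j : Fin m, i ≠ j → U i j = 0 := by
    intro i j hij
    rcases lt_or_gt_of_ne hij with hlt | hgt
    · exact hUtri' hlt
    · exact hUtri hgt
  have hdiag : ∀ i : Fin m, U i i * U i i = 1 := by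
    intro i
    have : (Uᵀ * U) i i = 1 := by rw [hUo]; exact Matrix.one_apply_eq i
    rw [Matrix.mul_apply] at this
    rwa [Finset.sum_eq_single i (fun k _ hk => by
      rw [Matrix.transpose_apply, hUoff k i hk, zero_mul]) (by simp)] at this
  have hTij : ∀ i j : Fin m, T1 i j = U i i * T2 i j := by
    intro i j
    rw [← hUT2, Matrix.mul_apply]
    exact Finset.sum_eq_single i (fun k _ hk => by rw [hUoff i k (Ne.symm hk), zero_mul])
      (by simp)
  have hUpos : ∀ i : Fin m, U i i = 1 := by
    intro i
    have e1 := hTij i i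
    rw [hT1, hT2, utOf_diag, utOf_diag] at e1
    have hpos : 0 < U i i := by nlinarith [h1 i, h2 i, hdiag i]
    rcases mul_self_eq_one_iff.1 (hdiag i) with h' | h'
    · exact h'
    · exfalso; rw [h'] at hpos; linarith
  funext p
  rw [← utOf_apply_coords x1 p, ← utOf_apply_coords x2 p, ← hT1, ← hT2,
    hTij p.1.1 p.1.2, hUpos, one_mul]

section CholeskyExists
attribute [local instance 2000] LinearOrder.toDecidableEq

lemma cholesky_exists {S : Matrix (Fin m) (Fin m) ℝ} (hS : S.PosDef) :
    ∃ x : TriIdx m → ℝ, (∀ i : Fin m, 0 < x ⟨(i, i), le_refl i⟩) ∧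
      (utOf x)ᵀ * utOf x = S := by
  haveI : WellFoundedLT (Fin m) := inferInstance
  set L := LDL.lower hS with hL
  have hLDL : L * LDL.diag hS * Lᵀ = S := by
    have := LDL.lower_conj_diag hS
    rwa [Matrix.conjTranspose_eq_transpose_of_trivial] at this
  haveI : Invertible (LDL.lowerInv hS) := LDL.invertibleLowerInv hS
  have hdpos : ∀ i, 0 < LDL.diagEntries hS i := by
    intro i
    have hv : LDL.lowerInv hS i ≠ 0 := by
      intro hrow
      have hdet : (LDL.lowerInv hS).det = 0 :=
        Matrix.det_eq_zero_of_row_eq_zero i (fun j => congrFun hrow j)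
      exact ((Matrix.isUnit_iff_isUnit_det _).1
        (isUnit_of_invertible (LDL.lowerInv hS))).ne_zero (by rw [hdet])
    have heq : LDL.diagEntries hS i
        = star (LDL.lowerInv hS i) ⬝ᵥ (S *ᵥ (LDL.lowerInv hS i)) := by
      rw [LDL.diagEntries, EuclideanSpace.inner_toLp_toLp, star_star, star_trivial, dotProduct_comm]
    rw [heq]
    exact hS.dotProduct_mulVec_pos hv
  set d : Fin m → ℝ := fun i => Real.sqrt (LDL.diagEntries hS i) with hd
  have hLtri : L.BlockTriangular OrderDual.toDual := by
    rw [hL]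
    unfold LDL.lower
    exact Matrix.blockTriangular_inv_of_blockTriangular
      (fun i j hij => LDL.lowerInv_triangular hS hij)
  have hLTtri : (Lᵀ).BlockTriangular id := fun i j hji => hLtri hji
  set T0 := Matrix.diagonal d * Lᵀ with hT0def
  have hT0tri : T0.BlockTriangular id := (Matrix.blockTriangular_diagonal d).mul hLTtri
  have hT0S : T0ᵀ * T0 = S := by
    rw [hT0def, Matrix.transpose_mul, Matrix.diagonal_transpose, Matrix.transpose_transpose,
      Matrix.mul_assoc, ← Matrix.mul_assoc (Matrix.diagonal d), Matrix.diagonal_mul_diagonal]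
    have : (fun i => d i * d i) = LDL.diagEntries hS := by
      funext i; exact Real.mul_self_sqrt (hdpos i).le
    rw [this, ← Matrix.mul_assoc]
    rw [show Matrix.diagonal (LDL.diagEntries hS) = LDL.diag hS from rfl]
    exact hLDL
  have hT0diag : ∀ i, T0 i i ≠ 0 := by
    have hdet : T0.det ≠ 0 := by
      intro h0
      have : S.det = 0 := by rw [← hT0S, Matrix.det_mul, h0, mul_zero]
      exact hS.det_pos.ne' this
    rw [Matrix.det_of_upperTriangular hT0tri] at hdet
    exact fun i => Finset.prod_ne_zero_iff.1 hdet i (Finset.mem_univ i)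
  set ε : Fin m → ℝ := fun i => if 0 < T0 i i then 1 else -1 with hε
  have hεsq : ∀ i, ε i * ε i = 1 := by
    intro i; rw [hε]; dsimp only; split <;> norm_num
  set T := Matrix.diagonal ε * T0 with hTdef
  have hTtri : T.BlockTriangular id := (Matrix.blockTriangular_diagonal ε).mul hT0tri
  have hTS : Tᵀ * T = S := by
    rw [hTdef, Matrix.transpose_mul, Matrix.diagonal_transpose, Matrix.mul_assoc,
      ← Matrix.mul_assoc (Matrix.diagonal ε), Matrix.diagonal_mul_diagonal]
    have : (fun i => ε i * ε i) = fun _ => (1 : ℝ) := funext hεsq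
    rw [this, Matrix.diagonal_one, Matrix.one_mul, hT0S]
  have hTdiag : ∀ i, 0 < T i i := by
    intro i
    have : T i i = ε i * T0 i i := by rw [hTdef, Matrix.diagonal_mul]
    rw [this, hε]
    dsimp only
    rcases lt_trichotomy (T0 i i) 0 with h | h | h
    · rw [if_neg (not_lt.2 h.le)]; nlinarith
    · exact absurd h (hT0diag i)
    · rw [if_pos h, one_mul]; exact h
  refine ⟨coordsOf T, fun i => ?_, ?_⟩
  · exact hTdiag i
  · rw [utOf_coordsOf hTtri, hTS]

end CholeskyExists

section Jacobian

lemma utOf_add (v w : TriIdx m → ℝ) : utOf (v + w) = utOf v + utOf w := by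
  ext i j
  simp only [utOf, Matrix.add_apply, Pi.add_apply]
  split <;> simp

lemma utOf_smul (c : ℝ) (v : TriIdx m → ℝ) : utOf (c • v) = c • utOf v := by
  ext i j
  simp only [utOf, Matrix.smul_apply, Pi.smul_apply, smul_eq_mul]
  split <;> simp

/-- The candidate derivative of the Cholesky map, as a linear map. -/
def DLin (x : TriIdx m → ℝ) : (TriIdx m → ℝ) →ₗ[ℝ] (TriIdx m → ℝ) where
  toFun v := coordsOf ((utOf v)ᵀ * utOf x + (utOf x)ᵀ * utOf v)
  map_add' v w := by
    funext p
    simp only [coordsOf, utOf_add, Matrix.transpose_add, Matrix.add_mul, Matrix.mul_add,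
      Matrix.add_apply, Pi.add_apply]
    ring
  map_smul' c v := by
    funext p
    simp only [coordsOf, utOf_smul, Matrix.transpose_smul, Matrix.smul_mul, Matrix.mul_smul,
      Matrix.add_apply, Matrix.smul_apply, Pi.smul_apply, RingHom.id_apply, smul_eq_mul]
    ring

/-- The candidate derivative as a continuous linear map. -/
noncomputable def DCLM (x : TriIdx m → ℝ) : (TriIdx m → ℝ) →L[ℝ] (TriIdx m → ℝ) :=
  LinearMap.toContinuousLinearMap (DLin x)

/-- Coordinate projections realizing `utOf`. -/
noncomputable def uL (k l : Fin m) : (TriIdx m → ℝ) →L[ℝ] ℝ :=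
  if h : k ≤ l then ContinuousLinearMap.proj (⟨(k, l), h⟩ : TriIdx m) else 0

lemma uL_apply (k l : Fin m) (v : TriIdx m → ℝ) : uL k l v = utOf v k l := by
  by_cases h : k ≤ l <;> simp [uL, utOf, h]

lemma hasFDerivAt_uL (k l : Fin m) (x : TriIdx m → ℝ) :
    HasFDerivAt (fun z => utOf z k l) (uL k l) x := by
  have : (fun z : TriIdx m → ℝ => utOf z k l) = ⇑(uL k l) :=
    funext fun v => (uL_apply k l v).symm
  rw [this]
  exact (uL k l).hasFDerivAt

lemma hasFDerivAt_phi (x : TriIdx m → ℝ) :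
    HasFDerivAt (fun z => coordsOf ((utOf z)ᵀ * utOf z)) (DCLM x) x := by
  rw [hasFDerivAt_pi']
  rintro ⟨⟨i, j⟩, hij⟩
  have h1 : HasFDerivAt (fun z => ∑ k, utOf z k i * utOf z k j)
      (∑ k : Fin m, (utOf x k i • uL k j + utOf x k j • uL k i)) x :=
    HasFDerivAt.fun_sum fun k _ => (hasFDerivAt_uL k i x).mul (hasFDerivAt_uL k j x)
  have h2 : (ContinuousLinearMap.proj (R := ℝ) (φ := fun _ : TriIdx m => ℝ)
        (⟨(i, j), hij⟩ : TriIdx m)).comp (DCLM x)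
      = ∑ k : Fin m, (utOf x k i • uL k j + utOf x k j • uL k i) := by
    ext v
    simp only [ContinuousLinearMap.comp_apply, ContinuousLinearMap.proj_apply,
      ContinuousLinearMap.coe_sum', Finset.sum_apply, ContinuousLinearMap.add_apply,
      ContinuousLinearMap.coe_smul', Pi.smul_apply, smul_eq_mul, uL_apply, DCLM,
      LinearMap.coe_toContinuousLinearMap', DLin, LinearMap.coe_mk, AddHom.coe_mk]
    simp only [coordsOf, Matrix.add_apply, Matrix.mul_apply, Matrix.transpose_apply]
    rw [← Finset.sum_add_distrib]
    exact Finset.sum_congr rfl fun k _ => by ring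
  rw [h2]
  exact h1.congr_of_eventuallyEq (Filter.Eventually.of_forall fun z => by
    simp [coordsOf, Matrix.mul_apply])

lemma utOf_single (q : TriIdx m) (k l : Fin m) :
    utOf (Pi.single q (1 : ℝ)) k l = if k = q.1.1 ∧ l = q.1.2 then 1 else 0 := by
  simp only [utOf]
  split
  · rename_i h
    rw [Pi.single_apply]
    congr 1
    simp [Subtype.ext_iff, Prod.ext_iff]
  · rename_i h
    rw [if_neg]
    rintro ⟨rfl, rfl⟩
    exact h q.2

lemma DLin_single (x : TriIdx m → ℝ) (q p : TriIdx m) :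
    DLin x (Pi.single q (1 : ℝ)) p
      = (if p.1.1 = q.1.2 then utOf x q.1.1 p.1.2 else 0)
        + (if p.1.2 = q.1.2 then utOf x q.1.1 p.1.1 else 0) := by
  obtain ⟨⟨i, j⟩, hij⟩ := p
  simp only [DLin, LinearMap.coe_mk, AddHom.coe_mk, coordsOf, Matrix.add_apply,
    Matrix.mul_apply, Matrix.transpose_apply, utOf_single]
  congr 1
  · by_cases hi : i = q.1.2
    · subst hi
      rw [if_pos rfl]
      rw [Finset.sum_eq_single q.1.1]
      · simp
      · intro k _ hk
        rw [if_neg (fun hc => hk hc.1), zero_mul]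
      · simp
    · rw [if_neg hi]
      apply Finset.sum_eq_zero
      intro k _
      rw [if_neg (fun hc => hi hc.2), zero_mul]
  · by_cases hj : j = q.1.2
    · subst hj
      rw [if_pos rfl]
      rw [Finset.sum_eq_single q.1.1]
      · simp
      · intro k _ hk
        rw [if_neg (fun hc => hk hc.1), mul_zero]
      · simp
    · rw [if_neg hj]
      apply Finset.sum_eq_zero
      intro k _
      rw [if_neg (fun hc => hj hc.2), mul_zero]

/-- Determinant of a block triangular matrix with injective block map. -/
lemma det_of_blockTriangular_injective {n α : Type*} [DecidableEq n] [Fintype n]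
    [DecidableEq α] [LinearOrder α] {M : Matrix n n ℝ} {b : n → α}
    (hb : Function.Injective b) (h : M.BlockTriangular b) :
    M.det = ∏ i, M i i := by
  rw [h.det, Finset.prod_image (fun p _ q _ hpq => hb hpq)]
  refine Finset.prod_congr rfl fun p _ => ?_
  letI : Unique {q // b q = b p} := ⟨⟨⟨p, rfl⟩⟩, fun q => Subtype.ext (hb q.2)⟩
  rw [Matrix.det_unique]
  rw [show (default : {q // b q = b p}) = ⟨p, rfl⟩ from rfl]
  rfl

def blex : TriIdx m → Lex (Fin m × Fin m) := fun p => toLex p.1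

lemma blex_injective : Function.Injective (blex (m := m)) := by
  intro p q h
  exact Subtype.ext (toLex.injective h)

lemma Jmat_apply (x : TriIdx m → ℝ) (p q : TriIdx m) :
    LinearMap.toMatrix' (DLin x) p q
      = (if p.1.1 = q.1.2 then utOf x q.1.1 p.1.2 else 0)
        + (if p.1.2 = q.1.2 then utOf x q.1.1 p.1.1 else 0) := by
  rw [LinearMap.toMatrix'_apply]
  exact DLin_single x q p

lemma Jmat_triangular (x : TriIdx m → ℝ) :
    ((LinearMap.toMatrix' (DLin x))ᵀ).BlockTriangular blex := by
  rintro ⟨⟨k, l⟩, hkl⟩ ⟨⟨i, j⟩, hij⟩ h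
  rw [Matrix.transpose_apply, Jmat_apply]
  have h' := (Prod.Lex.lt_iff (x := toLex (i, j)) (y := toLex (k, l))).1 h
  simp only at h' hkl hij ⊢
  rcases h' with hik | ⟨hik, hjl⟩
  · have h1 : ¬ i = l := fun he => absurd ((hkl.trans_eq he.symm).trans_lt hik) (lt_irrefl k)
    have h2 : utOf x k i = 0 := dif_neg (not_le.2 hik)
    simp [h1, h2]
  · have h1 : ¬ i = l := by
      intro he
      subst hik
      exact absurd (hjl.trans_le (he.symm ▸ hij)) (lt_irrefl j)
    have h2 : ¬ j = l := ne_of_lt hjl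
    simp [h1, h2]

lemma det_DLin (x : TriIdx m → ℝ) :
    LinearMap.det (DLin x)
      = 2 ^ m * ∏ i : Fin m, x ⟨(i, i), le_refl i⟩ ^ (m - (i : ℕ)) := by
  rw [← LinearMap.det_toMatrix', ← Matrix.det_transpose,
    det_of_blockTriangular_injective blex_injective (Jmat_triangular x)]
  have hdiag : ∀ p : TriIdx m, (LinearMap.toMatrix' (DLin x))ᵀ p p
      = if p.1.1 = p.1.2 then 2 * x ⟨(p.1.1, p.1.1), le_refl p.1.1⟩
        else x ⟨(p.1.1, p.1.1), le_refl p.1.1⟩ := by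
    rintro ⟨⟨i, j⟩, hij⟩
    rw [Matrix.transpose_apply, Jmat_apply]
    simp only
    by_cases hijeq : i = j
    · subst hijeq
      simp [utOf_diag, two_mul]
    · simp [hijeq, utOf_diag]
  rw [Finset.prod_congr rfl fun p _ => hdiag p]
  have hsub : (∏ p : TriIdx m, if p.1.1 = p.1.2 then 2 * x ⟨(p.1.1, p.1.1), le_refl p.1.1⟩
        else x ⟨(p.1.1, p.1.1), le_refl p.1.1⟩)
      = ∏ a ∈ Finset.univ.filter (fun a : Fin m × Fin m => a.1 ≤ a.2),
          (if a.1 = a.2 then 2 * x ⟨(a.1, a.1), le_refl a.1⟩ else x ⟨(a.1, a.1), le_refl a.1⟩) := by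
    rw [Finset.prod_subtype (p := fun a : Fin m × Fin m => a.1 ≤ a.2)
      (Finset.univ.filter (fun a : Fin m × Fin m => a.1 ≤ a.2))
      (fun a => by simp)
      (fun a : Fin m × Fin m => if a.1 = a.2 then 2 * x ⟨(a.1, a.1), le_refl a.1⟩
        else x ⟨(a.1, a.1), le_refl a.1⟩)]
  rw [hsub, Finset.prod_filter, Fintype.prod_prod_type]
  have hinner : ∀ i : Fin m,
      (∏ j : Fin m, if i ≤ j then (if i = j then 2 * x ⟨(i, i), le_refl i⟩
          else x ⟨(i, i), le_refl i⟩) else 1)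
        = 2 * x ⟨(i, i), le_refl i⟩ ^ (m - (i : ℕ)) := by
    intro i
    rw [← Finset.mul_prod_erase Finset.univ _ (Finset.mem_univ i)]
    have h1 : (if i ≤ i then (if i = i then 2 * x ⟨(i, i), le_refl i⟩
        else x ⟨(i, i), le_refl i⟩) else 1) = 2 * x ⟨(i, i), le_refl i⟩ := by simp
    have h2 : (∏ j ∈ Finset.univ.erase i, if i ≤ j then (if i = j then 2 * x ⟨(i, i), le_refl i⟩
        else x ⟨(i, i), le_refl i⟩) else 1)
        = x ⟨(i, i), le_refl i⟩ ^ (m - 1 - (i : ℕ)) := by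
      rw [Finset.prod_congr rfl (fun j hj => show _ = if i ≤ j then x ⟨(i, i), le_refl i⟩ else 1 by
        have hne : ¬ i = j := fun he => (Finset.mem_erase.1 hj).1 he.symm
        rw [if_neg hne])]
      rw [← Finset.prod_filter (fun j => i ≤ j) (fun _ => x ⟨(i, i), le_refl i⟩)]
      rw [show (Finset.univ.erase i).filter (fun j => i ≤ j) = Finset.Ioi i by
        ext j
        simp only [Finset.mem_filter, Finset.mem_erase, Finset.mem_univ, and_true, true_and,
          Finset.mem_Ioi]
        constructor
        · rintro ⟨hne, hle⟩; exact lt_of_le_of_ne hle (Ne.symm hne)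
        · intro hlt; exact ⟨(ne_of_lt hlt).symm, le_of_lt hlt⟩]
      rw [Finset.prod_const, Fin.card_Ioi]
    rw [h1, h2, mul_assoc, ← pow_succ']
    have hi := i.is_lt
    congr 2
    omega
  rw [Finset.prod_congr rfl fun i _ => hinner i, Finset.prod_mul_distrib,
    Finset.prod_const, Finset.card_univ, Fintype.card_fin]

end Jacobian

lemma tmul_symm (x : TriIdx m → ℝ) : ((utOf x)ᵀ * utOf x)ᵀ = (utOf x)ᵀ * utOf x := by
  rw [Matrix.transpose_mul, Matrix.transpose_transpose]

theorem stmt_15 (m : ℕ)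
    (φ : (TriIdx m → ℝ) → (TriIdx m → ℝ))
    (hφ : ∀ x, φ x = coordsOf ((utOf x)ᵀ * utOf x)) :
    Set.BijOn φ {x | ∀ i : Fin m, 0 < x ⟨(i, i), le_refl i⟩}
      {y | (symMatOf y).PosDef} ∧
    ∀ x ∈ {x : TriIdx m → ℝ | ∀ i : Fin m, 0 < x ⟨(i, i), le_refl i⟩},
      |LinearMap.det (fderiv ℝ φ x : (TriIdx m → ℝ) →ₗ[ℝ] (TriIdx m → ℝ))|
        = 2 ^ m * ∏ i : Fin m, x ⟨(i, i), le_refl i⟩ ^ (m - (i : ℕ)) := by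
  have hφfun : φ = fun z => coordsOf ((utOf z)ᵀ * utOf z) := funext hφ
  subst hφfun
  refine ⟨⟨?_, ?_, ?_⟩, ?_⟩
  · intro x hx
    show (symMatOf (coordsOf ((utOf x)ᵀ * utOf x))).PosDef
    rw [symMatOf_coordsOf (tmul_symm x)]
    exact tmul_posDef hx
  · intro x1 h1 x2 h2 heq
    apply cholesky_unique h1 h2
    have := congrArg symMatOf heq
    rwa [symMatOf_coordsOf (tmul_symm x1), symMatOf_coordsOf (tmul_symm x2)] at this
  · intro y hy
    obtain ⟨x, hx, hxy⟩ := cholesky_exists hy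
    exact ⟨x, hx, by simp only; rw [hxy, coordsOf_symMatOf]⟩
  · intro x hx
    have hfd : fderiv ℝ (fun z => coordsOf ((utOf z)ᵀ * utOf z)) x = DCLM x :=
      (hasFDerivAt_phi x).fderiv
    rw [hfd]
    rw [show ((DCLM x : (TriIdx m → ℝ) →L[ℝ] (TriIdx m → ℝ)) :
        (TriIdx m → ℝ) →ₗ[ℝ] (TriIdx m → ℝ)) = DLin x from
      LinearMap.coe_toContinuousLinearMap (DLin x)]
    rw [det_DLin x]
    refine abs_of_pos (mul_pos (by positivity) ?_)
    exact Finset.prod_pos fun i _ => pow_pos (hx i) _
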